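/- Let k be any positive integer and a ∈ F_{2^{2k}}. The polynomial x^3 + x + a is irreducible over F_{2^{2k}} if and only if a = d + d^{-1} for some non-cube d ∈ F_{2^{2k}}. -/

import Mathlib

open Polynomial

section AUX

/-- Fixed points of the `card F`-power map in an `F`-algebra field lie in (the image of) `F`. -/
lemma aux_fix (F K : Type*) [Field F] [Fintype F] [Field K] [Algebra F K]
    (z : K) (hz : z ^ Fintype.card F = z) : ∃ u : F, algebraMap F K u = z := by
  classical
  set q := Fintype.card F with hq
  have hq2 : 1 < q := Fintype.one_lt_card
  set P : K[X] := X ^ q - X with hP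
  have hdeg : P.degree = q := by
    rw [hP]
    rw [Polynomial.degree_sub_eq_left_of_degree_lt, Polynomial.degree_X_pow]
    rw [Polynomial.degree_X_pow, Polynomial.degree_X]
    exact_mod_cast hq2
  have hP0 : P ≠ 0 := fun h => by
    rw [h, Polynomial.degree_zero] at hdeg
    exact absurd hdeg (by simp)
  have hroot : ∀ u : F, P.IsRoot (algebraMap F K u) := by
    intro u
    simp only [hP, Polynomial.IsRoot, Polynomial.eval_sub, Polynomial.eval_pow,
      Polynomial.eval_X, sub_eq_zero]
    rw [← map_pow, FiniteField.pow_card]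
  set S : Finset K := Finset.univ.image (algebraMap F K) with hS
  have hcardS : S.card = q := by
    rw [hS, Finset.card_image_of_injective _ (algebraMap F K).injective, Finset.card_univ]
  have hsub : S ⊆ P.roots.toFinset := by
    intro w hw
    rw [hS, Finset.mem_image] at hw
    obtain ⟨u, -, rfl⟩ := hw
    rw [Multiset.mem_toFinset, Polynomial.mem_roots hP0]
    exact hroot u
  have hcardR : P.roots.toFinset.card ≤ q := by
    calc P.roots.toFinset.card ≤ Multiset.card P.roots := P.roots.toFinset_card_le
    _ ≤ P.natDegree := P.card_roots' 
    _ = q := Polynomial.natDegree_eq_of_degree_eq_some hdeg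
  have heq : S = P.roots.toFinset := Finset.eq_of_subset_of_card_le hsub (hcardS ▸ hcardR)
  have hzmem : z ∈ P.roots.toFinset := by
    rw [Multiset.mem_toFinset, Polynomial.mem_roots hP0]
    simp [hP, Polynomial.IsRoot, sub_eq_zero, hz]
  rw [← heq, hS, Finset.mem_image] at hzmem
  obtain ⟨u, -, hu⟩ := hzmem
  exact ⟨u, hu⟩

/-- The two roots of `z^2 + s z + 1`. -/
lemma aux_quad {K : Type*} [Field K] {s t z : K} (ht0 : t ≠ 0)
    (ht : t ^ 2 + s * t + 1 = 0) (hz : z ^ 2 + s * z + 1 = 0) : z = t ∨ z = t⁻¹ := by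
  have key : (z - t) * (z * t - 1) = 0 := by linear_combination t * hz - z * ht
  rcases mul_eq_zero.mp key with h | h
  · exact Or.inl (sub_eq_zero.mp h)
  · right
    have h1 : z * t = 1 := sub_eq_zero.mp h
    field_simp
    linear_combination h1

lemma aux_mod3 (k : ℕ) : ∃ m : ℕ, 2 ^ (2 * k) = 3 * m + 1 := by
  induction k with
  | zero => exact ⟨0, rfl⟩
  | succ n ih =>
    obtain ⟨m, hm⟩ := ih
    exact ⟨4 * m + 1, by rw [Nat.mul_succ, pow_add, hm]; ring⟩

end AUX

/-- `x^3 + x + a` is irreducible over `F_{2^{2k}}` iff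
`a = d + d⁻¹` for some non-cube `d`. -/
theorem stmt5 (F : Type*) [Field F] [Fintype F] (k : ℕ) (hk : 0 < k)
    (hcard : Fintype.card F = 2 ^ (2 * k)) (a : F) :
    Irreducible (X ^ 3 + X + C a : F[X]) ↔
      ∃ d : F, (¬ ∃ c : F, c ^ 3 = d) ∧ a = d + d⁻¹ := by
  classical
  -- characteristic 2
  have char2F : CharP F 2 := by
    obtain ⟨n, hp, hn⟩ := FiniteField.card F (ringChar F)
    have h2 : ringChar F = 2 := by
      have hdvd : ringChar F ∣ 2 ^ (2 * k) := by
        rw [← hcard, hn]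
        exact dvd_pow_self _ (by positivity)
      exact (Nat.prime_dvd_prime_iff_eq hp Nat.prime_two).mp (hp.dvd_of_dvd_pow hdvd)
    have := ringChar.charP F
    rwa [h2] at this
  haveI := char2F
  set K := AlgebraicClosure F with hK
  set i := algebraMap F K with hi
  have hinj : Function.Injective i := (algebraMap F K).injective
  haveI char2K : CharP K 2 := charP_of_injective_algebraMap hinj 2
  set q := 2 ^ (2 * k) with hqdef
  have hfrobF : ∀ u : F, u ^ q = u := fun u => by
    rw [← hcard]; exact FiniteField.pow_card u
  have hfrobi : ∀ u : F, (i u) ^ q = i u := fun u => by rw [← map_pow, hfrobF]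
  have hfix : ∀ z : K, z ^ q = z → ∃ u : F, i u = z := fun z hz =>
    aux_fix F K z (by rwa [hcard])
  have hfadd : ∀ u v : K, (u + v) ^ q = u ^ q + v ^ q := fun u v => by
    rw [hqdef]; haveI : Fact (Nat.Prime 2) := ⟨Nat.prime_two⟩; exact add_pow_char_pow u v 2 (2*k)
  have hnegK : ∀ u : K, -u = u := fun u => CharTwo.neg_eq u
  have hnegF : ∀ u : F, -u = u := fun u => CharTwo.neg_eq u
  have h2K : (2 : K) = 0 := CharTwo.two_eq_zero
  obtain ⟨m3, hm3⟩ : ∃ m : ℕ, q = 3 * m + 1 := aux_mod3 k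
  have homega : ∀ ω : K, ω ^ 3 = 1 → ω ^ q = ω := by
    intro ω hω
    rw [hm3, pow_add, pow_mul, hω, one_pow, one_mul, pow_one]
  -- the polynomial
  set p : F[X] := X ^ 3 + X + C a with hp
  have hpdeg : p.natDegree = 3 := by rw [hp]; compute_degree!
  have hp0 : p ≠ 0 := fun h => by rw [h] at hpdeg; simp at hpdeg
  have hpmonic : p.Monic := by
    rw [Polynomial.Monic, Polynomial.leadingCoeff, hpdeg, hp]
    simp [coeff_add, coeff_X_pow, coeff_X, coeff_C]
  have heval : ∀ x : F, p.eval x = x ^ 3 + x + a := by intro x; simp [hp]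
  have hiff : Irreducible p ↔ ∀ x : F, x ^ 3 + x + a ≠ 0 := by
    rw [irreducible_iff_roots_eq_zero_of_degree_le_three (by omega) (by omega)]
    rw [Multiset.eq_zero_iff_forall_notMem]
    constructor
    · intro h x hx
      exact h x (by rw [Polynomial.mem_roots hp0, Polynomial.IsRoot, heval]; exact hx)
    · intro h x hx
      rw [Polynomial.mem_roots hp0, Polynomial.IsRoot, heval] at hx
      exact h x hx
  -- quadratic roots helper: given t ≠ 0, t² + st + 1 = 0: s = t + t⁻¹
  have hsum : ∀ s t : K, t ≠ 0 → t ^ 2 + s * t + 1 = 0 → s = t + t⁻¹ := by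
    intro s t ht0 ht
    linear_combination t⁻¹ * ht + (-s - t) * mul_inv_cancel₀ ht0 + (-t - t⁻¹) * h2K
  -- cube identity
  have hcube : ∀ t : K, t ≠ 0 → (t + t⁻¹) ^ 3 + (t + t⁻¹) = t ^ 3 + (t ^ 3)⁻¹ := by
    intro t ht0
    have h : t * t⁻¹ = 1 := mul_inv_cancel₀ ht0
    rw [← inv_pow]
    linear_combination (3 * t + 3 * t⁻¹) * h + (2 * t + 2 * t⁻¹) * h2K
  have h2F : (2 : F) = 0 := CharTwo.two_eq_zero
  have hq0 : q ≠ 0 := by positivity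
  -- raising a quadratic relation to the q-th power
  have hraise : ∀ s z : K, s ^ q = s → z ^ 2 + s * z + 1 = 0 →
      (z ^ q) ^ 2 + s * z ^ q + 1 = 0 := by
    intro s z hs hz
    have h0 : (z ^ 2 + s * z + 1) ^ q = 0 := by rw [hz]; exact zero_pow hq0
    rw [hfadd, hfadd, mul_pow, hs, one_pow, pow_right_comm] at h0
    exact h0
  constructor
  · rintro hirr
    have hnr : ∀ x : F, x ^ 3 + x + a ≠ 0 := hiff.mp hirr
    have ha0 : a ≠ 0 := fun h => hnr 0 (by rw [h]; ring)
    obtain ⟨y, hy⟩ : ∃ y : K, y ^ 3 + y + i a = 0 := by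
      obtain ⟨y, hy⟩ := IsAlgClosed.exists_root (p.map (i : F →+* K)) (by
        rw [Polynomial.degree_map, Polynomial.degree_eq_natDegree hp0, hpdeg]
        exact (by norm_num : ((3 : ℕ) : WithBot ℕ) ≠ 0))
      refine ⟨y, ?_⟩
      have := hy
      rw [Polynomial.IsRoot, Polynomial.eval_map, hp] at this
      simpa using this
    have haev : Polynomial.aeval y p = 0 := by rw [hp]; simpa using hy
    have hyq : y ^ q ≠ y := by
      intro h
      obtain ⟨u, hu⟩ := hfix y h
      apply hnr u
      apply hinj
      rw [map_add, map_add, map_pow, hu, map_zero]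
      exact hy
    obtain ⟨t, ht⟩ : ∃ t : K, t ^ 2 + y * t + 1 = 0 := by
      have hqd : (X ^ 2 + C y * X + 1 : K[X]).natDegree = 2 := by compute_degree!
      have hqne : (X ^ 2 + C y * X + 1 : K[X]) ≠ 0 := fun h => by rw [h] at hqd; simp at hqd
      obtain ⟨t, htr⟩ := IsAlgClosed.exists_root (X ^ 2 + C y * X + 1 : K[X]) (by
        rw [Polynomial.degree_eq_natDegree hqne, hqd]; norm_num)
      refine ⟨t, ?_⟩
      have := htr
      rw [Polynomial.IsRoot] at this
      simpa using this
    have ht0 : t ≠ 0 := by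
      intro h
      rw [h] at ht
      simp at ht
    have hyt : y = t + t⁻¹ := hsum y t ht0 ht
    have ht30 : t ^ 3 ≠ 0 := pow_ne_zero _ ht0
    have hda : t ^ 3 + (t ^ 3)⁻¹ = i a := by
      rw [← hcube t ht0, ← hyt]
      linear_combination hy + (- i a) * h2K
    have hdq1 : (t ^ 3) ^ 2 + i a * t ^ 3 + 1 = 0 := by
      rw [← hda]
      have hinvt : t ^ 3 * (t ^ 3)⁻¹ = 1 := mul_inv_cancel₀ ht30
      linear_combination hinvt + ((t ^ 3) ^ 2 + 1) * h2K
    have hdqq : ((t ^ 3) ^ q) ^ 2 + i a * (t ^ 3) ^ q + 1 = 0 :=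
      hraise (i a) (t ^ 3) (hfrobi a) hdq1
    rcases aux_quad ht30 hdq1 hdqq with hcase | hcase
    · -- d := t^3 is fixed by Frobenius, hence in F
      obtain ⟨e, he⟩ := hfix (t ^ 3) hcase
      have he0 : e ≠ 0 := fun h => ht30 (by rw [← he, h, map_zero])
      refine ⟨e, ?_, ?_⟩
      · rintro ⟨c, hc⟩
        have hcz : c ≠ 0 := by
          intro h
          rw [h] at hc
          exact he0 (by rw [← hc]; ring)
        have hc0 : i c ≠ 0 := fun h => hcz (hinj (by rw [h, map_zero]))
        have hω3 : (t * (i c)⁻¹) ^ 3 = 1 := by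
          rw [mul_pow, inv_pow, ← map_pow, hc, he]
          exact mul_inv_cancel₀ ht30
        have hωq : (t * (i c)⁻¹) ^ q = t * (i c)⁻¹ := homega _ hω3
        have htq : t ^ q = t := by
          have hteq : t = (t * (i c)⁻¹) * i c := by rw [mul_assoc, inv_mul_cancel₀ hc0, mul_one]
          rw [hteq, mul_pow, hωq, hfrobi]
        obtain ⟨u, hu⟩ := hfix t htq
        apply hyq
        have hu0 : u ≠ 0 := fun h => ht0 (by rw [← hu, h, map_zero])
        rw [hyt, ← hu, ← map_inv₀, ← map_add, hfrobi]
      · apply hinj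
        rw [map_add, map_inv₀, he, hda]
    · -- bad case : (t^3)^q = (t^3)⁻¹ leads to y having degree ≤ 2
      exfalso
      obtain ⟨ω, hω3, hω⟩ : ∃ ω : K, ω ^ 3 = 1 ∧ t ^ q = ω * t⁻¹ := by
        refine ⟨t ^ q * t, ?_, ?_⟩
        · rw [mul_pow, pow_right_comm, hcase]
          exact inv_mul_cancel₀ ht30
        · rw [mul_assoc, mul_inv_cancel₀ ht0, mul_one]
      have hω0 : ω ≠ 0 := fun h => by rw [h] at hω3; simp at hω3
      have hωq : ω ^ q = ω := homega ω hω3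
      have htinvq : (t⁻¹) ^ q = ω⁻¹ * t := by
        rw [inv_pow, hω, mul_inv, inv_inv]
      have hyq2 : (y ^ q) ^ q = y := by
        have h1 : y ^ q = ω * t⁻¹ + ω⁻¹ * t := by rw [hyt, hfadd, hω, htinvq]
        rw [h1, hfadd, mul_pow, mul_pow, htinvq, inv_pow, hωq, hω, hyt]
        linear_combination (t + t⁻¹) * mul_inv_cancel₀ hω0
      have hb : (y + y ^ q) ^ q = y + y ^ q := by rw [hfadd, hyq2, add_comm]
      have hcfix : (y * y ^ q) ^ q = y * y ^ q := by rw [mul_pow, hyq2]; ring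
      obtain ⟨b, hbF⟩ := hfix _ hb
      obtain ⟨c, hcF⟩ := hfix _ hcfix
      set g : F[X] := X ^ 2 + C b * X + C c with hg
      have hgdeg : g.natDegree = 2 := by rw [hg]; compute_degree!
      have hg0 : g ≠ 0 := fun h => by rw [h] at hgdeg; simp at hgdeg
      have haevg : Polynomial.aeval y g = 0 := by
        rw [hg]
        simp only [map_add, map_mul, map_pow, Polynomial.aeval_X, Polynomial.aeval_C, map_one]
        rw [hbF, hcF]
        linear_combination (y ^ 2 + y * y ^ q) * h2K
      have hpg : p ∣ g := by
        obtain ⟨v, hv⟩ := minpoly.dvd F y haev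
        rcases hirr.isUnit_or_isUnit hv with h | h
        · exact absurd h (minpoly.not_isUnit F y)
        · have hpm : p ∣ minpoly F y := by
            obtain ⟨w, hw⟩ := h.exists_right_inv
            exact ⟨w, by rw [hv]; rw [mul_assoc, hw, mul_one]⟩
          exact dvd_trans hpm (minpoly.dvd F y haevg)
      have := Polynomial.natDegree_le_of_dvd hpg hg0
      omega
  · rintro ⟨d, hdnc, rfl⟩
    have hd0 : d ≠ 0 := fun h => hdnc ⟨0, by rw [h]; ring⟩
    have hidd : i d ≠ 0 := by simpa using hd0
    rw [hiff]
    intro x hx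
    obtain ⟨t, ht⟩ : ∃ t : K, t ^ 2 + i x * t + 1 = 0 := by
      have hqd : (X ^ 2 + C (i x) * X + 1 : K[X]).natDegree = 2 := by compute_degree!
      have hqne : (X ^ 2 + C (i x) * X + 1 : K[X]) ≠ 0 := fun h => by rw [h] at hqd; simp at hqd
      obtain ⟨t, htr⟩ := IsAlgClosed.exists_root (X ^ 2 + C (i x) * X + 1 : K[X]) (by
        rw [Polynomial.degree_eq_natDegree hqne, hqd]; norm_num)
      refine ⟨t, ?_⟩
      have := htr
      rw [Polynomial.IsRoot] at this
      simpa using this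
    have ht0 : t ≠ 0 := by
      intro h
      rw [h] at ht
      simp at ht
    have hxt : i x = t + t⁻¹ := hsum (i x) t ht0 ht
    have ht30 : t ^ 3 ≠ 0 := pow_ne_zero _ ht0
    -- t³ + t⁻³ = i d + (i d)⁻¹
    have hxa : x ^ 3 + x = d + d⁻¹ := by linear_combination hx + (-d - d⁻¹) * h2F
    have h5 : t ^ 3 + (t ^ 3)⁻¹ = i d + (i d)⁻¹ := by
      rw [← hcube t ht0, ← hxt, ← map_inv₀, ← map_pow, ← map_add, ← map_add, hxa]
    have hq1 : (i d) ^ 2 + (i d + (i d)⁻¹) * i d + 1 = 0 := by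
      have hinv : i d * (i d)⁻¹ = 1 := mul_inv_cancel₀ hidd
      linear_combination hinv + ((i d) ^ 2 + 1) * h2K
    have ht3q : (t ^ 3) ^ 2 + (i d + (i d)⁻¹) * t ^ 3 + 1 = 0 := by
      rw [← h5]
      have hinvt : t ^ 3 * (t ^ 3)⁻¹ = 1 := mul_inv_cancel₀ ht30
      linear_combination hinvt + ((t ^ 3) ^ 2 + 1) * h2K
    obtain ⟨e, he, hnce, he0⟩ : ∃ e : F, t ^ 3 = i e ∧ (¬∃ c : F, c ^ 3 = e) ∧ e ≠ 0 := by
      rcases aux_quad hidd hq1 ht3q with h | h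
      · exact ⟨d, h, hdnc, hd0⟩
      · refine ⟨d⁻¹, by rw [h, map_inv₀], fun ⟨c, hc⟩ => hdnc ⟨c⁻¹, ?_⟩, inv_ne_zero hd0⟩
        rw [inv_pow, hc, inv_inv]
    -- Frobenius on t
    have htqq : (t ^ q) ^ 2 + i x * t ^ q + 1 = 0 := hraise (i x) t (hfrobi x) ht
    rcases aux_quad ht0 ht htqq with hcase | hcase
    · obtain ⟨u, hu⟩ := hfix t hcase
      exact hnce ⟨u, hinj (by rw [map_pow, hu, he])⟩
    · -- t^q = t⁻¹ forces e = 1, a cube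
      have h6 : i e = (i e)⁻¹ := by
        calc i e = (i e) ^ q := (hfrobi e).symm
        _ = (t ^ 3) ^ q := by rw [he]
        _ = (t ^ q) ^ 3 := pow_right_comm t 3 q
        _ = (t ^ 3)⁻¹ := by rw [hcase, inv_pow]
        _ = (i e)⁻¹ := by rw [he]
      have he1 : e = e⁻¹ := hinj (by rw [map_inv₀]; exact h6)
      have he2 : e ^ 2 = 1 := by
        have := mul_inv_cancel₀ he0
        calc e ^ 2 = e * e := sq e
        _ = e * e⁻¹ := by rw [← he1]
        _ = 1 := mul_inv_cancel₀ he0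
      have hee : (e + 1) ^ 2 = 0 := by linear_combination he2 + (e + 1) * h2F
      have he1' : e = 1 := by
        have h7 : e + 1 = 0 := pow_eq_zero_iff (n := 2) (by norm_num) |>.mp hee
        linear_combination h7 + (-1 : F) * h2F
      exact hnce ⟨1, by rw [one_pow, he1']⟩
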